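/- arXiv:1603.00064 — 5 statements merged into one kernel-verified Lean document; each statement's English description precedes it below -/
import Mathlib

section
/- Let Λ be a discrete additive subgroup of ℝ^q and let r be the dimension of the ℝ-linear span of Λ. Then there is an isomorphism of topological additive groups between the quotient ℝ^q / Λ and (ℝ/ℤ)^r × ℝ^{q−r}. -/
/-- Let `Λ` be a discrete additive subgroup of `ℝ^q` and let `r` be
the dimension of the ℝ-linear span of `Λ`.  Then there is an isomorphism of
topological additive groups between `ℝ^q / Λ` and `(ℝ/ℤ)^r × ℝ^{q-r}` (an additive
group isomorphism which is a homeomorphism). -/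
theorem stmt2 (q : ℕ) (Λ : AddSubgroup (Fin q → ℝ)) (hΛ : DiscreteTopology Λ)
    (r : ℕ) (hr : r = Module.finrank ℝ (Submodule.span ℝ (Λ : Set (Fin q → ℝ)))) :
    ∃ e : ((Fin q → ℝ) ⧸ Λ) ≃+ ((Fin r → AddCircle (1 : ℝ)) × (Fin (q - r) → ℝ)),
      Continuous e ∧ Continuous e.symm := by
  classical
  set E := Fin q → ℝ with hE
  let L : Submodule ℤ E := AddSubgroup.toIntSubmodule Λ
  let V : Submodule ℝ E := Submodule.span ℝ (Λ : Set E)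
  have hLV : (L : Set E) ⊆ (V : Set E) := Submodule.subset_span
  have hdiscL : DiscreteTopology L := hΛ
  -- `L₀` is `Λ` seen inside its real span `V`
  let L₀ : Submodule ℤ V := L.comap ((V.subtype).restrictScalars ℤ)
  have hdisc₀ : DiscreteTopology L₀ :=
    DiscreteTopology.preimage_of_continuous_injective (L : Set E)
      continuous_subtype_val Subtype.val_injective
  have hmap₀ : L₀.map ((V.subtype).restrictScalars ℤ) = L := by
    rw [Submodule.map_comap_eq_self]
    intro x hx
    exact ⟨⟨x, hLV hx⟩, rfl⟩
  have hzlat : IsZLattice ℝ L₀ := by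
    constructor
    apply Submodule.map_injective_of_injective (V.injective_subtype)
    rw [Submodule.map_span, Submodule.map_top, Submodule.range_subtype]
    have : V.subtype '' (L₀ : Set V) = (L : Set E) := by
      rw [show (V.subtype '' (L₀ : Set V)) =
        ((L₀.map ((V.subtype).restrictScalars ℤ)) : Set E) from rfl, hmap₀]
    rw [this]
    rfl
  have : Module.Finite ℤ L₀ := ZLattice.module_finite ℝ L₀
  have : Module.Free ℤ L₀ := ZLattice.module_free ℝ L₀
  have hrank : Module.finrank ℤ L₀ = r := by
    rw [ZLattice.rank ℝ L₀, hr]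
  -- choose a `ℤ`-basis of `L₀` indexed by `Fin r`
  let b : Module.Basis (Fin r) ℤ L₀ :=
    (Module.Free.chooseBasis ℤ L₀).reindex
      (Fintype.equivFinOfCardEq
        (by rw [← Module.finrank_eq_card_chooseBasisIndex, hrank]))
  -- the corresponding `ℝ`-basis of `V`
  let bV : Module.Basis (Fin r) ℝ V := b.ofZLatticeBasis ℝ L₀
  have hbV : Submodule.span ℤ (Set.range bV) = L₀ := b.ofZLatticeBasis_span ℝ
  -- a complement `W` of `V` in `E`
  obtain ⟨W, hW⟩ := Submodule.exists_isCompl V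
  have hq : Module.finrank ℝ E = q := by
    show Module.finrank ℝ (Fin q → ℝ) = q
    simp
  have hVr : Module.finrank ℝ V = r := hr.symm
  have hrle : r ≤ q := by
    have h' : Module.finrank ℝ V ≤ Module.finrank ℝ E := Submodule.finrank_le V
    omega
  have hrankW : Module.finrank ℝ W = q - r := by
    have h := Submodule.finrank_add_eq_of_isCompl hW
    omega
  let dW : Module.Basis (Fin (q - r)) ℝ W := (Module.finBasis ℝ W).reindex (finCongr hrankW)
  -- the coordinate linear equivalence
  let Φ : (V × W) ≃ₗ[ℝ] E := Submodule.prodEquivOfIsCompl V W hW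
  let Ψ : E ≃ₗ[ℝ] ((Fin r → ℝ) × (Fin (q - r) → ℝ)) :=
    Φ.symm.trans (bV.equivFun.prodCongr dW.equivFun)
  -- the mod-ℤ projection on each coordinate
  let π : (Fin r → ℝ) →+ (Fin r → AddCircle (1 : ℝ)) :=
    { toFun := fun v i => (v i : AddCircle (1 : ℝ))
      map_zero' := by funext i; simp
      map_add' := fun u v => by funext i; simp }
  have hπoq : IsOpenQuotientMap π :=
    IsOpenQuotientMap.piMap (fun i => QuotientAddGroup.isOpenQuotientMap_mk)
  let g : ((Fin r → ℝ) × (Fin (q - r) → ℝ)) →+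
      ((Fin r → AddCircle (1 : ℝ)) × (Fin (q - r) → ℝ)) :=
    AddMonoidHom.prodMap π (AddMonoidHom.id _)
  have hgoq : IsOpenQuotientMap g := hπoq.prodMap IsOpenQuotientMap.id
  let f : E →+ ((Fin r → AddCircle (1 : ℝ)) × (Fin (q - r) → ℝ)) :=
    g.comp Ψ.toLinearMap.toAddMonoidHom
  have hΨcont : Continuous Ψ := Ψ.toLinearMap.continuous_of_finiteDimensional
  have hΨopen : IsOpenMap Ψ :=
    (LinearEquiv.toContinuousLinearEquiv Ψ).toHomeomorph.isOpenMap
  have hfcont : Continuous f := hgoq.continuous.comp hΨcont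
  have hfopen : IsOpenMap f := hgoq.isOpenMap.comp hΨopen
  have hfsurj : Function.Surjective f :=
    hgoq.surjective.comp Ψ.surjective
  have hfx : ∀ y : E, f y = (π (bV.equivFun (Φ.symm y).1), dW.equivFun (Φ.symm y).2) :=
    fun y => rfl
  -- the kernel of `f` is exactly `Λ`
  have hker : f.ker = Λ := by
    ext x
    simp only [AddMonoidHom.mem_ker]
    constructor
    · intro hx
      rw [hfx] at hx
      have h1 : π (bV.equivFun (Φ.symm x).1) = 0 := congrArg Prod.fst hx
      have h2 : dW.equivFun (Φ.symm x).2 = 0 := congrArg Prod.snd hx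
      have h2' : (Φ.symm x).2 = 0 := by
        apply dW.equivFun.injective
        rw [h2, map_zero]
      set v : V := (Φ.symm x).1 with hv
      have hxv : x = (v : E) := by
        conv_lhs => rw [← Φ.apply_symm_apply x]
        rw [show Φ (Φ.symm x) = ((Φ.symm x).1 : E) + ((Φ.symm x).2 : E) from rfl, h2']
        simp
        exact hv.symm
      have hmem : v ∈ Submodule.span ℤ (Set.range bV) := by
        rw [Module.Basis.mem_span_iff_repr_mem]
        intro i
        have hcoe : ((bV.repr v i : ℝ) : AddCircle (1 : ℝ)) = 0 := by
          have := congrFun h1 i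
          simpa [π, Module.Basis.equivFun_apply] using this
        rw [AddCircle.coe_eq_zero_iff] at hcoe
        obtain ⟨n, hn⟩ := hcoe
        exact ⟨n, by simpa using hn⟩
      rw [hbV] at hmem
      have hmem' : (v : E) ∈ Λ := hmem
      rwa [← hxv] at hmem'
    · intro hx
      have hxV : x ∈ V := hLV hx
      have hsymm : Φ.symm x = (⟨x, hxV⟩, 0) := by
        have := Submodule.prodEquivOfIsCompl_symm_apply_left V W hW (⟨x, hxV⟩ : V)
        exact this
      have hmem : (⟨x, hxV⟩ : V) ∈ Submodule.span ℤ (Set.range bV) := by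
        rw [hbV]
        exact hx
      rw [hfx, hsymm]
      refine Prod.ext ?_ (by simp)
      funext i
      show ((bV.equivFun (⟨x, hxV⟩ : V)) i : AddCircle (1 : ℝ)) = 0
      rw [Module.Basis.mem_span_iff_repr_mem] at hmem
      obtain ⟨n, hn⟩ := hmem i
      rw [Module.Basis.equivFun_apply, ← hn]
      rw [AddCircle.coe_eq_zero_iff]
      exact ⟨n, by simp⟩
  -- assemble the equivalence
  let e₁ : ((Fin q → ℝ) ⧸ Λ) ≃+ (E ⧸ f.ker) :=
    QuotientAddGroup.quotientAddEquivOfEq hker.symm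
  let e₂ := QuotientAddGroup.quotientKerEquivOfSurjective f hfsurj
  refine ⟨e₁.trans e₂, ?_, ?_⟩
  · have hcomp : ((e₁.trans e₂) ∘ (QuotientAddGroup.mk : E → E ⧸ Λ)) = f := rfl
    rw [(QuotientAddGroup.isQuotientMap_mk Λ).continuous_iff, hcomp]
    exact hfcont
  · rw [continuous_def]
    intro U hU
    have himg : ((e₁.trans e₂).symm) ⁻¹' U = (e₁.trans e₂) '' U := by
      ext y
      simp only [Set.mem_preimage, Set.mem_image]
      constructor
      · intro h
        exact ⟨_, h, (e₁.trans e₂).apply_symm_apply y⟩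
      · rintro ⟨z, hzU, rfl⟩
        rwa [(e₁.trans e₂).symm_apply_apply]
    rw [himg, ← Set.image_preimage_eq U (QuotientAddGroup.mk_surjective),
      ← Set.image_comp]
    have hcomp : ((e₁.trans e₂) ∘ (QuotientAddGroup.mk : E → E ⧸ Λ)) = f := rfl
    rw [hcomp]
    exact hfopen _ (hU.preimage (QuotientAddGroup.isQuotientMap_mk Λ).continuous)
end

section
/- Let Γ be the subgroup of Aff(ℝ²) generated by γ₁(x, y) = (x + 1, y) and γ₂(x, y) = (x + y, y + 1). Then: (i) the action of Γ on ℝ² is free and properly discontinuous; (ii) the translational part of Γ is Γ^tr = ℤ·(1, 0), so Γ has translational rank 1; (iii) the linear part is Γ^lin = {[[1, m],[0, 1]] : m ∈ ℤ}, the group of upper-triangular unipotent integer matrices. -/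
/-- The normal form of elements of our group. -/
def Pfm (k c : ℤ) (γ : (ℝ × ℝ) ≃ᵃ[ℝ] (ℝ × ℝ)) : Prop :=
  ∀ p : ℝ × ℝ, γ p = (p.1 + (k : ℝ) * p.2 + (c : ℝ), p.2 + (k : ℝ))

lemma Pfm.congr {k c k' c' : ℤ} {γ : (ℝ × ℝ) ≃ᵃ[ℝ] (ℝ × ℝ)}
    (hk : k = k') (hc : c = c') (h : Pfm k c γ) : Pfm k' c' γ := hk ▸ hc ▸ h

lemma Pfm.mul {k c k' c' : ℤ} {γ γ' : (ℝ × ℝ) ≃ᵃ[ℝ] (ℝ × ℝ)}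
    (h : Pfm k c γ) (h' : Pfm k' c' γ') :
    Pfm (k + k') (c + c' + k * k') (γ * γ') := by
  intro p
  have e : (γ * γ') p = γ (γ' p) := by rw [AffineEquiv.coe_mul]; rfl
  rw [e, h', h]
  simp only [Prod.mk.injEq]
  push_cast
  constructor <;> ring

lemma Pfm.one : Pfm 0 0 (1 : (ℝ × ℝ) ≃ᵃ[ℝ] (ℝ × ℝ)) := by
  intro p
  simp [AffineEquiv.coe_one]

lemma Pfm.inv {k c : ℤ} {γ : (ℝ × ℝ) ≃ᵃ[ℝ] (ℝ × ℝ)}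
    (h : Pfm k c γ) : Pfm (-k) (k * k - c) γ⁻¹ := by
  intro p
  rw [AffineEquiv.inv_def]
  apply γ.injective
  rw [AffineEquiv.apply_symm_apply, h]
  rw [Prod.ext_iff]
  push_cast
  constructor <;> (show _ = _) <;> ring

lemma Pfm.linear {k c : ℤ} {γ : (ℝ × ℝ) ≃ᵃ[ℝ] (ℝ × ℝ)}
    (h : Pfm k c γ) (v : ℝ × ℝ) :
    AffineEquiv.linear γ v = (v.1 + (k : ℝ) * v.2, v.2) := by
  have h0 := γ.map_vadd (0 : ℝ × ℝ) v
  have : AffineEquiv.linear γ v = γ (v +ᵥ (0 : ℝ × ℝ)) - γ 0 := by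
    rw [h0]; simp [vadd_eq_add]
  rw [this, h, h]
  simp only [vadd_eq_add, Prod.fst_add, Prod.snd_add, Prod.fst_zero, Prod.snd_zero,
    Prod.mk_sub_mk, Prod.mk.injEq]
  constructor <;> ring


/-- Let `Γ ≤ Aff(ℝ²)` be the subgroup generated by
`γ₁(x, y) = (x + 1, y)` and `γ₂(x, y) = (x + y, y + 1)`.  Then:
(i) the action of `Γ` on `ℝ²` is free and properly discontinuous;
(ii) the translational part of `Γ` is `Γ^tr = ℤ·(1, 0)` (so `Γ` has translational
rank 1);
(iii) the linear part is `Γ^lin = {[[1, m],[0, 1]] : m ∈ ℤ}`, the group of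
upper-triangular unipotent integer matrices. -/
theorem stmt5 (g₁ g₂ : (ℝ × ℝ) ≃ᵃ[ℝ] (ℝ × ℝ))
    (h₁ : ∀ p : ℝ × ℝ, g₁ p = (p.1 + 1, p.2))
    (h₂ : ∀ p : ℝ × ℝ, g₂ p = (p.1 + p.2, p.2 + 1)) :
    -- (i) free
    (∀ γ ∈ Subgroup.closure {g₁, g₂}, γ ≠ 1 → ∀ p : ℝ × ℝ, γ p ≠ p) ∧
    -- (i) properly discontinuous
    (∀ K L : Set (ℝ × ℝ), IsCompact K → IsCompact L →
      {γ : (ℝ × ℝ) ≃ᵃ[ℝ] (ℝ × ℝ) | γ ∈ Subgroup.closure {g₁, g₂} ∧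
        (⇑γ '' K ∩ L).Nonempty}.Finite) ∧
    -- (ii) translational part
    ({v : ℝ × ℝ | AffineEquiv.constVAdd ℝ (ℝ × ℝ) v ∈ Subgroup.closure {g₁, g₂}} =
      {v : ℝ × ℝ | ∃ n : ℤ, v = ((n : ℝ), (0 : ℝ))}) ∧
    -- (iii) linear part
    ({L : (ℝ × ℝ) ≃ₗ[ℝ] (ℝ × ℝ) | ∃ γ ∈ Subgroup.closure {g₁, g₂},
        AffineEquiv.linear γ = L} =
      {L : (ℝ × ℝ) ≃ₗ[ℝ] (ℝ × ℝ) | ∃ m : ℤ,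
        ∀ p : ℝ × ℝ, L p = (p.1 + (m : ℝ) * p.2, p.2)}) := by
  have hP1 : Pfm 0 1 g₁ := by intro p; rw [h₁]; norm_num
  have hP2 : Pfm 1 0 g₂ := by intro p; rw [h₂]; norm_num
  -- every element of the closure has a normal form
  have hcl_sub : ∀ γ ∈ Subgroup.closure {g₁, g₂}, ∃ k c : ℤ, Pfm k c γ := by
    intro γ hγ
    refine Subgroup.closure_induction ?_ ?_ ?_ ?_ hγ
    · intro x hx
      rcases hx with rfl | rfl
      exacts [⟨0, 1, hP1⟩, ⟨1, 0, hP2⟩]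
    · exact ⟨0, 0, Pfm.one⟩
    · rintro x y _ _ ⟨k, c, hx⟩ ⟨k', c', hy⟩; exact ⟨_, _, hx.mul hy⟩
    · rintro x _ ⟨k, c, hx⟩; exact ⟨_, _, hx.inv⟩
  -- powers of g₁
  have g1pow : ∀ j : ℤ, Pfm 0 j (g₁ ^ j) := by
    intro j
    induction j using Int.induction_on with
    | zero => rw [zpow_zero]; exact Pfm.one
    | succ i ih =>
        rw [zpow_add_one]
        exact (ih.mul hP1).congr (by ring) (by push_cast; ring)
    | pred i ih =>
        rw [zpow_sub_one]
        exact (ih.mul hP1.inv).congr (by ring) (by push_cast; ring)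
  -- powers of g₂
  have g2pow : ∀ k : ℤ, ∃ c : ℤ, Pfm k c (g₂ ^ k) := by
    intro k
    induction k using Int.induction_on with
    | zero => exact ⟨0, by rw [zpow_zero]; exact Pfm.one⟩
    | succ i ih =>
        obtain ⟨c, ih⟩ := ih
        refine ⟨c + 0 + i * 1, ?_⟩
        rw [zpow_add_one]
        exact (ih.mul hP2).congr rfl rfl
    | pred i ih =>
        obtain ⟨c, ih⟩ := ih
        refine ⟨c + (1 * 1 - 0) + (-i) * (-1), ?_⟩
        rw [zpow_sub_one]
        exact (ih.mul hP2.inv).congr (by ring) rfl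
  -- every normal form lies in the closure
  have memS : ∀ (k c : ℤ) (γ : (ℝ × ℝ) ≃ᵃ[ℝ] (ℝ × ℝ)), Pfm k c γ →
      γ ∈ Subgroup.closure {g₁, g₂} := by
    intro k c γ h
    obtain ⟨c₀, hc₀⟩ := g2pow k
    have hδ : Pfm 0 (c - c₀) ((g₂ ^ k)⁻¹ * γ) :=
      ((hc₀.inv).mul h).congr (by ring) (by ring)
    have hδe : (g₂ ^ k)⁻¹ * γ = g₁ ^ (c - c₀) :=
      AffineEquiv.ext fun p => by rw [hδ p, (g1pow (c - c₀)) p]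
    have hγe : γ = g₂ ^ k * g₁ ^ (c - c₀) := by rw [← hδe]; group
    rw [hγe]
    have m1 : g₁ ∈ Subgroup.closure {g₁, g₂} :=
      Subgroup.subset_closure (by left; rfl)
    have m2 : g₂ ∈ Subgroup.closure {g₁, g₂} :=
      Subgroup.subset_closure (by right; rfl)
    exact mul_mem (zpow_mem m2 k) (zpow_mem m1 _)
  refine ⟨?_, ?_, ?_, ?_⟩
  · -- freeness
    intro γ hγ hne p hfix
    obtain ⟨k, c, hkc⟩ := hcl_sub γ hγ
    have h := hkc p
    rw [hfix] at h
    have hk : (k : ℝ) = 0 := by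
      have := congrArg Prod.snd h
      simp at this
      exact_mod_cast this
    have hc : (c : ℝ) = 0 := by
      have := congrArg Prod.fst h
      simp [hk] at this
      exact_mod_cast this
    apply hne
    apply AffineEquiv.ext
    intro q
    rw [hkc q, hk, hc]
    simp
  · -- proper discontinuity
    intro K L hK hL
    obtain ⟨r, hr⟩ := (hK.union hL).isBounded.subset_closedBall (0 : ℝ × ℝ)
    set R := max r 0 with hRdef
    have hRnn : (0 : ℝ) ≤ R := le_max_right _ _
    have hball : ∀ p ∈ K ∪ L, -R ≤ p.1 ∧ p.1 ≤ R ∧ -R ≤ p.2 ∧ p.2 ≤ R := by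
      intro p hp
      have hpr := hr hp
      rw [Metric.mem_closedBall, dist_zero_right] at hpr
      have h1 : ‖p.1‖ ≤ ‖p‖ := norm_fst_le p
      have h2 : ‖p.2‖ ≤ ‖p‖ := norm_snd_le p
      rw [Real.norm_eq_abs, abs_le] at h1 h2
      have hrR : ‖p‖ ≤ R := hpr.trans (le_max_left _ _)
      exact ⟨by linarith [h1.1], by linarith [h1.2], by linarith [h2.1],
        by linarith [h2.2]⟩
    set N : ℤ := ⌈2 * R + 2 * R * R⌉ with hNdef
    have hNge : (2 : ℝ) * R + 2 * R * R ≤ (N : ℝ) := Int.le_ceil _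
    set T : Set (ℝ × ℝ) :=
      ((fun n : ℤ => (n : ℝ)) '' (Set.Icc (-N) N)) ×ˢ
        ((fun n : ℤ => (n : ℝ)) '' (Set.Icc (-N) N)) with hTdef
    have hT : T.Finite :=
      ((Set.finite_Icc _ _).image _).prod ((Set.finite_Icc _ _).image _)
    apply Set.Finite.of_finite_image (f := fun γ => γ ((0 : ℝ), (0 : ℝ)))
    · apply hT.subset
      rintro q ⟨γ, ⟨hγcl, hne⟩, rfl⟩
      obtain ⟨k, c, hkc⟩ := hcl_sub γ hγcl
      obtain ⟨y, ⟨x, hxK, rfl⟩, hyL⟩ := hne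
      obtain ⟨hx1, hx2, hx3, hx4⟩ := hball x (Or.inl hxK)
      have hy := hball (γ x) (Or.inr hyL)
      rw [hkc x] at hy
      obtain ⟨hy1, hy2, hy3, hy4⟩ := hy
      simp only at hy1 hy2 hy3 hy4
      have hk1 : -(2 * R) ≤ (k : ℝ) := by linarith
      have hk2 : (k : ℝ) ≤ 2 * R := by linarith
      have hc1 : -(2 * R + 2 * R * R) ≤ (c : ℝ) := by nlinarith
      have hc2 : (c : ℝ) ≤ 2 * R + 2 * R * R := by nlinarith
      have hq : γ ((0 : ℝ), (0 : ℝ)) = ((c : ℝ), (k : ℝ)) := by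
        rw [hkc]; norm_num
      show γ ((0 : ℝ), (0 : ℝ)) ∈ T
      rw [hq]
      have hkN1 : -N ≤ k := by
        have : -(N : ℝ) ≤ (k : ℝ) := by nlinarith
        exact_mod_cast this
      have hkN2 : k ≤ N := by
        have : (k : ℝ) ≤ (N : ℝ) := by nlinarith
        exact_mod_cast this
      have hcN1 : -N ≤ c := by
        have : -(N : ℝ) ≤ (c : ℝ) := by nlinarith
        exact_mod_cast this
      have hcN2 : c ≤ N := by
        have : (c : ℝ) ≤ (N : ℝ) := by nlinarith
        exact_mod_cast this
      exact ⟨⟨c, ⟨hcN1, hcN2⟩, rfl⟩, ⟨k, ⟨hkN1, hkN2⟩, rfl⟩⟩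
    · rintro γ ⟨hγcl, -⟩ γ' ⟨hγ'cl, -⟩ hq
      obtain ⟨k, c, hkc⟩ := hcl_sub γ hγcl
      obtain ⟨k', c', hkc'⟩ := hcl_sub γ' hγ'cl
      simp only at hq
      rw [hkc, hkc'] at hq
      norm_num at hq
      apply AffineEquiv.ext
      intro p
      rw [hkc p, hkc' p, hq.1, hq.2]
  · -- translational part
    ext v
    simp only [Set.mem_setOf_eq]
    constructor
    · intro hv
      obtain ⟨k, c, hkc⟩ := hcl_sub _ hv
      have h0 := hkc ((0 : ℝ), (0 : ℝ))
      have h1 := hkc ((0 : ℝ), (1 : ℝ))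
      simp only [AffineEquiv.constVAdd_apply, vadd_eq_add] at h0 h1
      have h0f : v.1 = (c : ℝ) := by
        have := congrArg Prod.fst h0; simp at this; linarith
      have h0s : v.2 = (k : ℝ) := by
        have := congrArg Prod.snd h0; simp at this; linarith
      have h1f : v.1 = (k : ℝ) + c := by
        have := congrArg Prod.fst h1; simp at this; linarith
      have hk0 : (k : ℝ) = 0 := by linarith
      exact ⟨c, by rw [Prod.ext_iff]; exact ⟨h0f, by rw [h0s, hk0]⟩⟩
    · rintro ⟨n, rfl⟩
      apply memS 0 n
      intro p
      rw [Prod.ext_iff]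
      simp only [AffineEquiv.constVAdd_apply, vadd_eq_add, Prod.fst_add,
        Prod.snd_add]
      push_cast
      constructor <;> (show _ = _) <;> ring
  · -- linear part
    ext Lin
    simp only [Set.mem_setOf_eq]
    constructor
    · rintro ⟨γ, hγcl, rfl⟩
      obtain ⟨k, c, hkc⟩ := hcl_sub γ hγcl
      exact ⟨k, fun p => hkc.linear p⟩
    · rintro ⟨m, hm⟩
      obtain ⟨c₀, hc₀⟩ := g2pow m
      refine ⟨g₂ ^ m, memS m c₀ _ hc₀, ?_⟩
      apply LinearEquiv.ext
      intro v
      rw [hc₀.linear v, hm v]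
end

section
/- Let V be a finite-dimensional real vector space and let C ⊆ V be a closed additive subgroup. Then C = (C^∨)^∨, i.e. C = {v ∈ V : ξ(v) ∈ ℤ for every linear functional ξ ∈ V* with ξ(C) ⊆ ℤ}. -/
open Filter Topology Submodule

open Filter Topology

lemma lemA {V : Type*} [NormedAddCommGroup V] [NormedSpace ℝ V] [FiniteDimensional ℝ V]
    (S : AddSubgroup V) (hS : IsClosed (S : Set V))
    (h : ∀ x : V, (∀ t : ℝ, t • x ∈ S) → x = 0) :
    ∃ ε > (0:ℝ), ∀ x ∈ S, ‖x‖ < ε → x = 0 := by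
  by_contra hcon
  push_neg at hcon
  -- sequence of small nonzero elements
  have hseq : ∀ n : ℕ, ∃ x : V, x ∈ S ∧ ‖x‖ < 1 / (n + 1) ∧ x ≠ 0 := by
    intro n
    obtain ⟨x, hxS, hxn, hx0⟩ := hcon (1 / (n + 1)) (by positivity)
    exact ⟨x, hxS, hxn, hx0⟩
  choose x hxS hxn hx0 using hseq
  have hnormpos : ∀ n, (0:ℝ) < ‖x n‖ := fun n => norm_pos_iff.mpr (hx0 n)
  set u : ℕ → V := fun n => ‖x n‖⁻¹ • x n with hu
  have hu_mem : ∀ n, u n ∈ Metric.sphere (0:V) 1 := by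
    intro n
    simp only [mem_sphere_iff_norm, sub_zero, hu, norm_smul, norm_inv, norm_norm]
    rw [inv_mul_cancel₀ (hnormpos n).ne']
  obtain ⟨l, hl, φ, hφ, hconv⟩ := (isCompact_sphere (0:V) 1).tendsto_subseq hu_mem
  have hxto : Tendsto (fun n => ‖x (φ n)‖) atTop (𝓝 0) := by
    refine squeeze_zero (fun n => (hnormpos _).le) (fun n => (hxn (φ n)).le) ?_
    have : Tendsto (fun n : ℕ => 1 / ((n:ℝ) + 1)) atTop (𝓝 0) :=
      tendsto_one_div_add_atTop_nhds_zero_nat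
    refine squeeze_zero (fun n => by positivity) (fun n => ?_) this
    gcongr
    exact_mod_cast hφ.le_apply
  have hlS : ∀ t : ℝ, t • l ∈ S := by
    intro t
    have hy : ∀ n, (⌊t / ‖x (φ n)‖⌋ : ℤ) • x (φ n) ∈ S := fun n =>
      AddSubgroup.zsmul_mem _ (hxS _) _
    have hyt : Tendsto (fun n => (⌊t / ‖x (φ n)‖⌋ : ℤ) • x (φ n)) atTop (𝓝 (t • l)) := by
      have hrw : ∀ n, (⌊t / ‖x (φ n)‖⌋ : ℤ) • x (φ n)
          = ((⌊t / ‖x (φ n)‖⌋ : ℝ) * ‖x (φ n)‖) • u (φ n) := by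
        intro n
        rw [hu, mul_smul, smul_inv_smul₀ (hnormpos (φ n)).ne', ← Int.cast_smul_eq_zsmul ℝ]
      simp only [hrw]
      have ha : Tendsto (fun n => (⌊t / ‖x (φ n)‖⌋ : ℝ) * ‖x (φ n)‖) atTop (𝓝 t) := by
        have hsub : Tendsto
            (fun n => t - (⌊t / ‖x (φ n)‖⌋ : ℝ) * ‖x (φ n)‖) atTop (𝓝 0) := by
          refine squeeze_zero (fun n => ?_) (fun n => ?_) hxto
          · have h1 : (⌊t / ‖x (φ n)‖⌋ : ℝ) ≤ t / ‖x (φ n)‖ := Int.floor_le _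
            have := mul_le_mul_of_nonneg_right h1 (hnormpos (φ n)).le
            rw [div_mul_cancel₀ _ (hnormpos (φ n)).ne'] at this
            linarith
          · have h2 : t / ‖x (φ n)‖ < (⌊t / ‖x (φ n)‖⌋ : ℝ) + 1 := Int.lt_floor_add_one _
            have := mul_lt_mul_of_pos_right h2 (hnormpos (φ n))
            rw [div_mul_cancel₀ _ (hnormpos (φ n)).ne', add_mul, one_mul] at this
            linarith
        have := (tendsto_const_nhds (x := t) (f := atTop (α := ℕ))).sub hsub
        simpa using this
      exact ha.smul hconv
    exact hS.mem_of_tendsto hyt (Filter.Eventually.of_forall hy)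
  have := h l hlS
  rw [this] at hl
  simp at hl



/-- Let `V` be a finite-dimensional real vector space (with its
standard topology) and let `C ⊆ V` be a closed additive subgroup.  Then
`C = (C^∨)^∨`, i.e. `C` consists exactly of those `v ∈ V` such that `ξ(v) ∈ ℤ`
for every linear functional `ξ ∈ V*` with `ξ(C) ⊆ ℤ`. -/
theorem stmt9 {V : Type*} [NormedAddCommGroup V] [NormedSpace ℝ V]
    [FiniteDimensional ℝ V] (C : AddSubgroup V) (hC : IsClosed (C : Set V)) :
    (C : Set V) =
      {v : V | ∀ ξ : Module.Dual ℝ V,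
        (∀ c ∈ C, ∃ n : ℤ, ξ c = (n : ℝ)) → ∃ n : ℤ, ξ v = (n : ℝ)} := by
  apply Set.Subset.antisymm
  · intro v hv ξ hξ; exact hξ v hv
  intro v hv
  by_contra hvC
  suffices hsep : ∃ ξ : Module.Dual ℝ V,
      (∀ c ∈ C, ∃ n : ℤ, ξ c = (n : ℝ)) ∧ ∀ n : ℤ, ξ v ≠ (n : ℝ) by
    obtain ⟨ξ, h1, h2⟩ := hsep
    obtain ⟨n, hn⟩ := hv ξ h1
    exact h2 n hn
  -- the subspace of lines contained in C
  set U : Submodule ℝ V :=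
    { carrier := {x : V | ∀ t : ℝ, t • x ∈ C}
      add_mem' := fun {a b} ha hb t => by
        have := C.add_mem (ha t) (hb t); rwa [← smul_add] at this
      zero_mem' := fun t => by simpa using C.zero_mem
      smul_mem' := fun c x hx t => by
        have := hx (t * c); rwa [mul_smul] at this } with hUdef
  have hUC : ∀ x ∈ U, x ∈ C := fun x hx => by simpa using hx 1
  obtain ⟨W, hUW⟩ := Submodule.exists_isCompl U
  set D : AddSubgroup V := C ⊓ W.toAddSubgroup with hDdef
  have hDC : ∀ x ∈ D, x ∈ C := fun x hx => hx.1
  have hDW : ∀ x ∈ D, x ∈ W := fun x hx => hx.2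
  have hDclosed : IsClosed (D : Set V) := by
    have : (D : Set V) = (C : Set V) ∩ (W : Set V) := rfl
    rw [this]
    exact hC.inter W.closed_of_finiteDimensional
  have hDline : ∀ x : V, (∀ t : ℝ, t • x ∈ D) → x = 0 := by
    intro x hx
    have hxU : x ∈ U := fun t => (hx t).1
    have hxW : x ∈ W := by simpa using (hx 1).2
    have : x ∈ U ⊓ W := ⟨hxU, hxW⟩
    rwa [hUW.inf_eq_bot, Submodule.mem_bot] at this
  obtain ⟨ε, hε, hεD⟩ := lemA D hDclosed hDline
  -- C = U + D
  have hCdecomp : ∀ c ∈ C, ∃ u ∈ U, ∃ d ∈ D, c = u + d := by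
    intro c hc
    obtain ⟨u, w, hu, hw, huw⟩ := Submodule.codisjoint_iff_exists_add_eq.mp hUW.codisjoint c
    refine ⟨u, hu, w, ⟨?_, hw⟩, huw.symm⟩
    have : w = c - u := by rw [← huw]; abel
    rw [this]
    exact C.sub_mem hc (hUC u hu)
  -- the span of D
  set W₁ : Submodule ℝ V := span ℝ (D : Set V) with hW₁def
  have hW₁W : W₁ ≤ W := span_le.mpr hDW
  have hDW₁ : ∀ x ∈ D, x ∈ W₁ := fun x hx => subset_span hx
  -- D as a lattice in W₁
  set L : Submodule ℤ ↥W₁ :=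
    (AddSubgroup.toIntSubmodule D).comap ((W₁.subtype).restrictScalars ℤ) with hLdef
  have hLmem : ∀ x : ↥W₁, x ∈ L ↔ (x : V) ∈ D := fun x => Iff.rfl
  haveI hLdisc : DiscreteTopology ↥L := by
    rw [discreteTopology_iff_isOpen_singleton_zero]
    have : ({0} : Set ↥L) =
        (fun x : ↥L => ((x : ↥W₁) : V)) ⁻¹' Metric.ball (0:V) ε := by
      ext x
      simp only [Set.mem_singleton_iff, Set.mem_preimage, Metric.mem_ball, dist_zero_right]
      constructor
      · rintro rfl; simpa using hε
      · intro hx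
        have := hεD _ (hLmem _ |>.mp x.2) hx
        ext
        simpa using this
    rw [this]
    exact (Metric.isOpen_ball).preimage (continuous_subtype_val.comp continuous_subtype_val)
  haveI hLZ : IsZLattice ℝ L := by
    constructor
    have hinj := Submodule.map_injective_of_injective (Submodule.injective_subtype W₁)
    apply hinj
    rw [Submodule.map_span, Submodule.map_top, Submodule.range_subtype]
    have himg : W₁.subtype '' (L : Set ↥W₁) = (D : Set V) := by
      ext y
      constructor
      · rintro ⟨⟨y, hyW⟩, hyL, rfl⟩; exact hyL
      · intro hy; exact ⟨⟨y, hDW₁ y hy⟩, hy, rfl⟩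
    rw [himg, ← hW₁def]
  haveI := ZLattice.module_finite ℝ L
  haveI := ZLattice.module_free ℝ L
  set b := Module.Free.chooseBasis ℤ ↥L with hbdef
  set b' := Module.Basis.ofZLatticeBasis ℝ L b with hb'def
  have hspanb' : span ℤ (Set.range b') = L := b.ofZLatticeBasis_span ℝ
  -- complement W₂ of U ⊔ W₁
  obtain ⟨W₂, hW₂⟩ := Submodule.exists_isCompl (U ⊔ W₁)
  have hcompl : IsCompl W₁ (U ⊔ W₂) := by
    constructor
    · rw [disjoint_iff]
      ext x
      simp only [Submodule.mem_inf, Submodule.mem_bot]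
      constructor
      · rintro ⟨hx1, hx2⟩
        obtain ⟨u, hu, w₂, hw₂, huw⟩ := Submodule.mem_sup.mp hx2
        have hw₂' : w₂ ∈ U ⊔ W₁ := by
          have : w₂ = x - u := by rw [← huw]; abel
          rw [this]
          exact Submodule.sub_mem _ (Submodule.mem_sup_right hx1) (Submodule.mem_sup_left hu)
        have hw₂0 : w₂ = 0 := by
          have : w₂ ∈ (U ⊔ W₁) ⊓ W₂ := ⟨hw₂', hw₂⟩
          rwa [hW₂.inf_eq_bot, Submodule.mem_bot] at this
        have hxu : x = u := by rw [← huw, hw₂0, add_zero]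
        have : x ∈ U ⊓ W := ⟨hxu ▸ hu, hW₁W hx1⟩
        rwa [hUW.inf_eq_bot, Submodule.mem_bot] at this
      · rintro rfl; exact ⟨Submodule.zero_mem _, Submodule.zero_mem _⟩
    · rw [codisjoint_iff, ← sup_assoc, sup_comm W₁ U]
      exact hW₂.codisjoint.eq_top
  -- decompose v
  obtain ⟨w₁, r, hw₁, hr, hvsum⟩ :=
    Submodule.codisjoint_iff_exists_add_eq.mp hcompl.codisjoint v
  obtain ⟨u, hu, w₂, hw₂, hrsum⟩ := Submodule.mem_sup.mp hr
  by_cases hw₂0 : w₂ = 0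
  · -- v = w₁ + u with w₁ ∈ W₁, w₁ ∉ D
    have hvw : v = w₁ + u := by rw [← hvsum, ← hrsum, hw₂0, add_zero]
    have hw₁D : w₁ ∉ D := by
      intro hmem
      exact hvC (hvw ▸ C.add_mem (hDC w₁ hmem) (hUC u hu))
    set x₁ : ↥W₁ := ⟨w₁, hw₁⟩ with hx₁def
    have hx₁L : x₁ ∉ L := fun hmem => hw₁D ((hLmem x₁).mp hmem)
    rw [← hspanb'] at hx₁L
    rw [Module.Basis.mem_span_iff_repr_mem] at hx₁L
    push_neg at hx₁L
    obtain ⟨j, hj⟩ := hx₁L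
    set π₁ := W₁.projectionOnto (U ⊔ W₂) hcompl with hπ₁def
    refine ⟨(b'.coord j).comp π₁, ?_, ?_⟩
    · intro c hc
      obtain ⟨u', hu', d, hd, rfl⟩ := hCdecomp c hc
      have hπ : π₁ (u' + d) = ⟨d, hDW₁ d hd⟩ := by
        rw [map_add, Submodule.linearProjOfIsCompl_apply_right' hcompl
          (Submodule.mem_sup_left hu'), zero_add,
          Submodule.linearProjOfIsCompl_apply_left hcompl ⟨d, hDW₁ d hd⟩]
      have hdL : (⟨d, hDW₁ d hd⟩ : ↥W₁) ∈ span ℤ (Set.range b') := by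
        rw [hspanb']; exact (hLmem _).mpr hd
      rw [Module.Basis.mem_span_iff_repr_mem] at hdL
      obtain ⟨n, hn⟩ := hdL j
      refine ⟨n, ?_⟩
      simp only [LinearMap.comp_apply, hπ, Module.Basis.coord_apply]
      rw [← hn]
      simp
    · intro n hn
      apply hj
      refine ⟨n, ?_⟩
      have hπv : π₁ v = x₁ := by
        rw [hvw, map_add, Submodule.linearProjOfIsCompl_apply_right' hcompl
          (Submodule.mem_sup_left hu), add_zero,
          Submodule.linearProjOfIsCompl_apply_left hcompl x₁]
      simp only [LinearMap.comp_apply, hπv, Module.Basis.coord_apply] at hn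
      rw [hn]
      simp
  · -- w₂ ≠ 0 : kill U ⊔ W₁, send w₂ to 1/2
    have hf : ∃ f : Module.Dual ℝ V, f w₂ ≠ 0 := by
      by_contra hall
      push_neg at hall
      exact hw₂0 ((Module.forall_dual_apply_eq_zero_iff ℝ w₂).mp hall)
    obtain ⟨f, hf⟩ := hf
    set π₂ := W₂.projectionOnto (U ⊔ W₁) hW₂.symm with hπ₂def
    refine ⟨(2 * f w₂)⁻¹ • (f.comp (W₂.subtype.comp π₂)), ?_, ?_⟩
    · intro c hc
      obtain ⟨u', hu', d, hd, rfl⟩ := hCdecomp c hc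
      have hπ : π₂ (u' + d) = 0 :=
        Submodule.linearProjOfIsCompl_apply_right' hW₂.symm
          (Submodule.add_mem _ (Submodule.mem_sup_left hu')
            (Submodule.mem_sup_right (hDW₁ d hd)))
      refine ⟨0, ?_⟩
      simp [hπ]
    · intro n hn
      have hπv : π₂ v = ⟨w₂, hw₂⟩ := by
        have hvw : v = (w₁ + u) + w₂ := by rw [← hvsum, ← hrsum]; abel
        rw [hvw, map_add, Submodule.linearProjOfIsCompl_apply_right' hW₂.symm
          (Submodule.add_mem _ (Submodule.mem_sup_right hw₁)
            (Submodule.mem_sup_left hu)), zero_add,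
          Submodule.linearProjOfIsCompl_apply_left hW₂.symm ⟨w₂, hw₂⟩]
      simp only [LinearMap.smul_apply, LinearMap.comp_apply, hπv, Submodule.coe_subtype,
        smul_eq_mul] at hn
      have hval : (2 * f w₂)⁻¹ * f w₂ = 2⁻¹ := by
        rw [mul_inv, mul_assoc, inv_mul_cancel₀ hf, mul_one]
      rw [hval] at hn
      have h2 : (2 : ℝ) * n = 1 := by
        rw [← hn]
        norm_num
      have : (2 * n : ℤ) = 1 := by exact_mod_cast h2
      omega
end

section
/- Let V be a finite-dimensional real vector space and let C ⊆ V be a closed additive subgroup. Then: (i) Cospan(C) := {v ∈ V : t·v ∈ C for all t ∈ ℝ} is a linear subspace of V (the largest linear subspace contained in C); (ii) the image of C in the quotient vector space V / Cospan(C) is a discrete additive subgroup; (iii) if moreover C spans V over ℝ, then C / Cospan(C) is a lattice in V / Cospan(C), i.e. it is discrete and the quotient of V / Cospan(C) by it is compact. -/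
open Filter Topology

private lemma key_discrete {V : Type*} [NormedAddCommGroup V] [NormedSpace ℝ V]
    [FiniteDimensional ℝ V] (D : AddSubgroup V) (hD : IsClosed (D : Set V))
    (h0 : ∀ v : V, (∀ t : ℝ, t • v ∈ D) → v = 0) :
    ∃ ε > (0:ℝ), ∀ x ∈ D, ‖x‖ < ε → x = 0 := by
  by_contra h
  push_neg at h
  have hseq : ∀ n : ℕ, ∃ x : V, x ∈ D ∧ ‖x‖ < 1 / (n + 1) ∧ x ≠ 0 := by
    intro n
    obtain ⟨x, hx, hxn, hx0⟩ := h (1 / (n + 1)) (by positivity)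
    exact ⟨x, hx, hxn, hx0⟩
  choose x hxD hxn hx0 using hseq
  have hxpos : ∀ n, 0 < ‖x n‖ := fun n => norm_pos_iff.mpr (hx0 n)
  set u : ℕ → V := fun n => ‖x n‖⁻¹ • x n with hu
  have husphere : ∀ n, u n ∈ Metric.sphere (0:V) 1 := by
    intro n
    simp [hu, norm_smul, abs_of_pos (inv_pos.mpr (hxpos n)),
      inv_mul_cancel₀ (hxpos n).ne']
  obtain ⟨l, hl, φ, hφ, hconv⟩ :=
    (isCompact_sphere (0:V) 1).tendsto_subseq husphere
  have hnorm0 : Tendsto (fun n => ‖x (φ n)‖) atTop (𝓝 0) := by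
    have h1 : Tendsto (fun n : ℕ => 1 / ((n:ℝ) + 1)) atTop (𝓝 0) :=
      tendsto_one_div_add_atTop_nhds_zero_nat
    have := squeeze_zero (fun n => (hxpos n).le) (fun n => (hxn n).le) h1
    exact this.comp hφ.tendsto_atTop
  have hmain : ∀ t : ℝ, t • l ∈ D := by
    intro t
    have hmem : ∀ n, (⌊t / ‖x (φ n)‖⌋ : ℤ) • x (φ n) ∈ D :=
      fun n => AddSubgroup.zsmul_mem D (hxD (φ n)) _
    have heq : ∀ n, (⌊t / ‖x (φ n)‖⌋ : ℤ) • x (φ n)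
        = ((⌊t / ‖x (φ n)‖⌋ : ℝ) * ‖x (φ n)‖) • u (φ n) := by
      intro n
      rw [hu, smul_smul, mul_assoc, mul_inv_cancel₀ (hxpos (φ n)).ne', mul_one,
        Int.cast_smul_eq_zsmul]
    have hscal : Tendsto (fun n => (⌊t / ‖x (φ n)‖⌋ : ℝ) * ‖x (φ n)‖) atTop (𝓝 t) := by
      rw [tendsto_iff_dist_tendsto_zero]
      refine squeeze_zero (fun n => dist_nonneg) (fun n => ?_) hnorm0
      rw [Real.dist_eq]
      set r := ‖x (φ n)‖
      have hr : 0 < r := hxpos (φ n)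
      have h1 : (⌊t / r⌋ : ℝ) ≤ t / r := Int.floor_le _
      have h2 : t / r < ⌊t / r⌋ + 1 := Int.lt_floor_add_one _
      rw [abs_le]
      constructor
      · nlinarith [mul_le_mul_of_nonneg_right h1 hr.le, (div_mul_cancel₀ t hr.ne')]
      · nlinarith [mul_lt_mul_of_pos_right h2 hr, (div_mul_cancel₀ t hr.ne')]
    have htend : Tendsto (fun n => (⌊t / ‖x (φ n)‖⌋ : ℤ) • x (φ n)) atTop (𝓝 (t • l)) := by
      simp_rw [heq]
      exact hscal.smul (hconv : Tendsto (fun n => u (φ n)) atTop (𝓝 l))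
    exact hD.mem_of_tendsto htend (Eventually.of_forall hmem)
  have := h0 l hmain
  rw [this] at hl
  simp at hl

/-- Let `V` be a finite-dimensional real vector space and let
`C ⊆ V` be a closed additive subgroup.  Then:
(i) `Cospan(C) = {v ∈ V : t·v ∈ C for all t ∈ ℝ}` is a linear subspace of `V`,
the largest linear subspace contained in `C`;
(ii) the image of `C` in the quotient `V / Cospan(C)` is a discrete additive
subgroup;
(iii) if moreover `C` spans `V` over ℝ, then `C / Cospan(C)` is a lattice in
`V / Cospan(C)`: it is discrete and the quotient of `V / Cospan(C)` by it is
compact. -/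
theorem stmt11 {V : Type*} [NormedAddCommGroup V] [NormedSpace ℝ V]
    [FiniteDimensional ℝ V] (C : AddSubgroup V) (hC : IsClosed (C : Set V)) :
    ∃ W : Submodule ℝ V,
      -- (i): W is the subspace {v | ∀ t, t • v ∈ C}, and it is the largest
      -- linear subspace contained in C
      (W : Set V) = {v : V | ∀ t : ℝ, t • v ∈ C} ∧
      (W : Set V) ⊆ (C : Set V) ∧
      (∀ W' : Submodule ℝ V, (W' : Set V) ⊆ (C : Set V) → W' ≤ W) ∧
      -- (ii): the image of C in V / Cospan(C) is discrete
      DiscreteTopology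
        (AddSubgroup.map (QuotientAddGroup.mk' W.toAddSubgroup) C) ∧
      -- (iii): if C spans V, then C / Cospan(C) is cocompact in V / Cospan(C)
      (Submodule.span ℝ (C : Set V) = ⊤ →
        CompactSpace
          ((V ⧸ W.toAddSubgroup) ⧸
            AddSubgroup.map (QuotientAddGroup.mk' W.toAddSubgroup) C)) := by
  classical
  set W : Submodule ℝ V :=
    { carrier := {v : V | ∀ t : ℝ, t • v ∈ C}
      add_mem' := fun {a b} ha hb t => by
        simpa [smul_add] using C.add_mem (ha t) (hb t)
      zero_mem' := fun t => by simpa using C.zero_mem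
      smul_mem' := fun s v hv t => by simpa [smul_smul] using hv (t * s) } with hWdef
  have hWC : (W : Set V) ⊆ (C : Set V) := fun v hv => by simpa using hv 1
  -- complement and projection
  obtain ⟨U, hcompl⟩ := Submodule.exists_isCompl W
  set πl : V →ₗ[ℝ] V := U.subtype ∘ₗ U.projectionOnto W hcompl.symm with hπl
  have hπ_memU : ∀ v : V, πl v ∈ U := fun v =>
    (U.projectionOnto W hcompl.symm v).2
  have hπ_sub : ∀ v : V, v - πl v ∈ W := by
    intro v
    have h := Submodule.projection_add_projection_eq_self hcompl.symm v
    have h2 : v - πl v = (W.projectionOnto U hcompl.symm.symm v : V) := by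
      simp only [hπl, LinearMap.coe_comp, Function.comp_apply, Submodule.coe_subtype]
      rw [sub_eq_iff_eq_add]
      exact ((add_comm _ _).trans h).symm
    rw [h2]; exact Submodule.coe_mem _
  have hπ_zero : ∀ w ∈ W, πl w = 0 := by
    intro w hw
    simp only [hπl, LinearMap.coe_comp, Function.comp_apply, Submodule.coe_subtype]
    rw [Submodule.projectionOnto_apply_of_mem_right hcompl.symm hw]
    simp
  set πc : V →L[ℝ] V := LinearMap.toContinuousLinearMap πl with hπc
  -- key lemma applied to C ⊓ U
  have hCU_closed : IsClosed ((C ⊓ U.toAddSubgroup : AddSubgroup V) : Set V) := by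
    have h2 : ((C ⊓ U.toAddSubgroup : AddSubgroup V) : Set V)
        = (C : Set V) ∩ (U : Set V) := rfl
    rw [h2]
    exact hC.inter U.closed_of_finiteDimensional
  obtain ⟨ε, hε, hkey⟩ := key_discrete (C ⊓ U.toAddSubgroup) hCU_closed (by
    intro v hv
    have hvW : v ∈ W := fun t => (hv t).1
    have hvU : v ∈ U := by simpa using (hv 1).2
    exact Submodule.disjoint_def.mp hcompl.disjoint v hvW hvU)
  set δ : ℝ := ε / (‖πc‖ + 1) with hδ
  have hδpos : 0 < δ := div_pos hε (by positivity)
  -- (ii)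
  have hdisc : DiscreteTopology
      (AddSubgroup.map (QuotientAddGroup.mk' W.toAddSubgroup) C) := by
    refine discreteTopology_iff_isOpen_singleton_zero.mpr ?_
    rw [isOpen_induced_iff]
    refine ⟨(QuotientAddGroup.mk (s := W.toAddSubgroup)) '' Metric.ball 0 δ,
      QuotientAddGroup.isOpenMap_coe _ Metric.isOpen_ball, ?_⟩
    ext ⟨y, hy⟩
    simp only [Set.mem_preimage, Set.mem_singleton_iff]
    constructor
    · rintro ⟨v, hv, hmkv⟩
      obtain ⟨c, hcC, hmkc⟩ := hy
      have hsub : c - v ∈ W.toAddSubgroup := by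
        rw [← QuotientAddGroup.eq_iff_sub_mem, hmkv]
        exact hmkc
      have hπeq : πl c = πl v := by
        have h3 := hπ_zero _ hsub
        rw [map_sub, sub_eq_zero] at h3
        exact h3
      -- πl c lies in C ⊓ U and is small
      have hπcC : πl c ∈ C := by
        have : c - πl c ∈ C := hWC (hπ_sub c)
        have h4 := C.sub_mem hcC this
        simpa using h4
      have hvnorm : ‖v‖ < δ := by simpa using Metric.mem_ball.mp hv
      have hπnorm : ‖πl c‖ < ε := by
        have h5 : ‖πc v‖ ≤ ‖πc‖ * ‖v‖ := πc.le_opNorm v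
        have h6 : πc v = πl v := rfl
        have h7 : 0 ≤ ‖πc‖ := norm_nonneg _
        have h8 : (‖πc‖ + 1) * δ = ε := by
          rw [hδ]; field_simp
        rw [hπeq, ← h6]
        nlinarith
      have hπ0 : πl c = 0 :=
        hkey _ ⟨hπcC, hπ_memU c⟩ hπnorm
      have hcW : c ∈ W.toAddSubgroup := by
        have := hπ_sub c
        rw [hπ0, sub_zero] at this
        exact this
      have : y = 0 := by
        rw [← hmkc]
        exact (QuotientAddGroup.eq_zero_iff c).mpr hcW
      exact Subtype.ext this
    · intro h
      have hy0 : y = 0 := by simpa [Subtype.ext_iff] using h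
      rw [hy0]
      exact ⟨0, Metric.mem_ball_self hδpos, by simp⟩
  refine ⟨W, rfl, hWC, fun W' hW' v hv t => hW' (W'.smul_mem t hv), hdisc, ?_⟩
  -- (iii)
  intro hspan
  obtain ⟨s, hsC, hs_span, hs_li⟩ := exists_linearIndependent ℝ (C : Set V)
  rw [hspan] at hs_span
  have hfin : s.Finite := hs_li.setFinite
  haveI : Fintype s := hfin.fintype
  let b : Module.Basis s ℝ V := Module.Basis.mk hs_li (by rw [Subtype.range_coe]; exact hs_span.ge)
  set D := AddSubgroup.map (QuotientAddGroup.mk' W.toAddSubgroup) C with hD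
  set qh : V →+ (V ⧸ W.toAddSubgroup) ⧸ D :=
    (QuotientAddGroup.mk' D).comp (QuotientAddGroup.mk' W.toAddSubgroup) with hqh
  have hqcont : Continuous qh :=
    QuotientAddGroup.continuous_mk.comp QuotientAddGroup.continuous_mk
  set K : Set V := (fun t : s → ℝ => ∑ i, t i • (i : V)) ''
    (Set.univ.pi fun _ => Set.Icc (0:ℝ) 1) with hK
  have hKcomp : IsCompact K := by
    refine (isCompact_univ_pi fun _ => isCompact_Icc).image ?_
    exact continuous_finset_sum _ fun i _ => (continuous_apply i).smul continuous_const
  have hquniv : Set.univ ⊆ ⇑qh '' K := by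
    rintro x -
    obtain ⟨y, rfl⟩ := QuotientAddGroup.mk_surjective x
    obtain ⟨v, rfl⟩ := QuotientAddGroup.mk_surjective y
    set t : s → ℝ := fun i => b.repr v i with ht
    set c : V := ∑ i, (⌊t i⌋ : ℤ) • (i : V) with hc
    have hcC : c ∈ C := AddSubgroup.sum_mem _ fun i _ => AddSubgroup.zsmul_mem _ (hsC i.2) _
    have hvc : v - c = ∑ i : s, Int.fract (t i) • (i : V) := by
      have hv : v = ∑ i : s, t i • (i : V) := by
        conv_lhs => rw [← b.sum_repr v]
        refine Finset.sum_congr rfl fun i _ => ?_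
        rw [show b i = (i : V) from by rw [Module.Basis.coe_mk]]
      rw [hv, hc, ← Finset.sum_sub_distrib]
      refine Finset.sum_congr rfl fun i _ => ?_
      rw [Int.fract, sub_smul, Int.cast_smul_eq_zsmul]
    have hmemK : v - c ∈ K := by
      refine ⟨fun i => Int.fract (t i), fun i _ => ?_, hvc.symm⟩
      exact ⟨Int.fract_nonneg _, (Int.fract_lt_one _).le⟩
    have hqc0 : qh c = 0 := by
      have hmem : (QuotientAddGroup.mk' W.toAddSubgroup) c ∈ D :=
        AddSubgroup.mem_map_of_mem _ hcC
      exact (QuotientAddGroup.eq_zero_iff _).mpr hmem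
    refine ⟨v - c, hmemK, ?_⟩
    rw [map_sub, hqc0, sub_zero]
    rfl
  have huniv : ⇑qh '' K = Set.univ := Set.eq_univ_of_univ_subset hquniv
  exact ⟨huniv ▸ hKcomp.image hqcont⟩
end

section
/- Let V be a finite-dimensional real vector space and let C ⊆ V be a closed additive subgroup. Then in the dual space V*: the ℝ-linear span of C^∨ equals the annihilator of Cospan(C), and Cospan(C^∨) equals the annihilator of Span_ℝ(C). -/
open Submodule Module Filter

lemma aux_zero {a : ℝ} (h : ∀ t : ℝ, ∃ n : ℤ, t * a = n) : a = 0 := by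
  by_contra ha
  obtain ⟨n, hn⟩ := h ((2*a)⁻¹)
  have h2 : (n : ℝ) = 1/2 := by
    rw [← hn]; field_simp
  have h3 : ((2*n : ℤ) : ℝ) = 1 := by push_cast; linarith
  have h4 : (2*n : ℤ) = 1 := by exact_mod_cast h3
  omega

lemma keyA {V : Type*} [NormedAddCommGroup V] [NormedSpace ℝ V] [FiniteDimensional ℝ V]
    (C : AddSubgroup V) (hC : IsClosed (C : Set V))
    (hcos : ∀ v : V, (∀ t : ℝ, t • v ∈ C) → v = 0) :
    ∃ ε > 0, ∀ c ∈ C, ‖c‖ < ε → c = 0 := by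
  by_contra h
  push_neg at h
  have h' : ∀ n : ℕ, ∃ c : V, c ∈ C ∧ ‖c‖ < 1/(n+1) ∧ c ≠ 0 := by
    intro n
    obtain ⟨c, hc, hlt, hne⟩ := h (1/(n+1)) (by positivity)
    exact ⟨c, hc, hlt, hne⟩
  choose c hcC hcn hc0 using h'
  set u : ℕ → V := fun n => ‖c n‖⁻¹ • c n with hu
  have hus : ∀ n, u n ∈ Metric.sphere (0:V) 1 := by
    intro n
    simp only [u, Metric.mem_sphere, dist_zero_right, norm_smul, norm_inv, norm_norm]
    rw [inv_mul_cancel₀ (norm_ne_zero_iff.mpr (hc0 n))]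
  obtain ⟨v, hv, φ, hφ, hconv⟩ := (isCompact_sphere (0:V) 1).tendsto_subseq hus
  have hv0 : v ≠ 0 := by
    intro h0
    rw [h0] at hv
    simp at hv
  refine hv0 (hcos v ?_)
  intro t
  have hnormpos : ∀ n, (0:ℝ) < ‖c n‖ := fun n => norm_pos_iff.mpr (hc0 n)
  set a : ℕ → ℝ := fun n => (⌊t / ‖c (φ n)‖⌋ : ℝ) * ‖c (φ n)‖ with ha
  have hmem : ∀ n, a n • u (φ n) ∈ C := by
    intro n
    have he : a n • u (φ n) = ⌊t / ‖c (φ n)‖⌋ • c (φ n) := by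
      rw [hu, smul_smul, ha, ← Int.cast_smul_eq_zsmul ℝ]
      congr 1
      show (⌊t / ‖c (φ n)‖⌋:ℝ) * ‖c (φ n)‖ * ‖c (φ n)‖⁻¹ = _
      rw [mul_assoc, mul_inv_cancel₀ (hnormpos (φ n)).ne', mul_one]
    rw [he]
    exact AddSubgroup.zsmul_mem _ (hcC _) _
  have hnorm0 : Tendsto (fun n => ‖c (φ n)‖) atTop (nhds 0) := by
    refine squeeze_zero (fun n => norm_nonneg _) (fun n => ?_) tendsto_one_div_add_atTop_nhds_zero_nat
    calc ‖c (φ n)‖ ≤ 1/(φ n + 1) := (hcn (φ n)).le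
    _ ≤ 1/(n+1) := by
        apply one_div_le_one_div_of_le (by positivity)
        have : (n:ℝ) ≤ (φ n : ℝ) := by exact_mod_cast hφ.le_apply
        linarith
  have hat : Tendsto a atTop (nhds t) := by
    rw [← tendsto_sub_nhds_zero_iff]
    refine squeeze_zero_norm (fun n => ?_) hnorm0
    have hpos := hnormpos (φ n)
    have h2 : a n - t = ((⌊t / ‖c (φ n)‖⌋ : ℝ) - t / ‖c (φ n)‖) * ‖c (φ n)‖ := by
      rw [ha]
      field_simp
    calc ‖a n - t‖
        = |(⌊t / ‖c (φ n)‖⌋ : ℝ) - t / ‖c (φ n)‖| * ‖c (φ n)‖ := by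
          rw [Real.norm_eq_abs, h2, abs_mul, abs_of_pos hpos]
    _ ≤ 1 * ‖c (φ n)‖ := by
          gcongr
          rw [abs_le]
          constructor
          · linarith [Int.lt_floor_add_one (t / ‖c (φ n)‖)]
          · linarith [Int.floor_le (t / ‖c (φ n)‖)]
    _ = ‖c (φ n)‖ := one_mul _
  have hlim : Tendsto (fun n => a n • u (φ n)) atTop (nhds (t • v)) := hat.smul hconv
  exact hC.mem_of_tendsto hlim (Filter.Eventually.of_forall hmem)


/-- Let `V` be a finite-dimensional real vector space and let
`C ⊆ V` be a closed additive subgroup.  Then in the dual space `V*`: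
the ℝ-linear span of `C^∨ = {ξ : ξ(C) ⊆ ℤ}` equals the annihilator of
`Cospan(C) = {v : t·v ∈ C for all t}`, and `Cospan(C^∨)` equals the annihilator
of `Span_ℝ(C)`. -/
theorem stmt12 {V : Type*} [NormedAddCommGroup V] [NormedSpace ℝ V]
    [FiniteDimensional ℝ V] (C : AddSubgroup V) (hC : IsClosed (C : Set V)) :
    -- Span(C^∨) = annihilator of Cospan(C)
    ((Submodule.span ℝ
        {ξ : Module.Dual ℝ V | ∀ c ∈ C, ∃ n : ℤ, ξ c = (n : ℝ)} :
          Set (Module.Dual ℝ V)) =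
      {ξ : Module.Dual ℝ V | ∀ v : V, (∀ t : ℝ, t • v ∈ C) → ξ v = 0}) ∧
    -- Cospan(C^∨) = annihilator of Span(C)
    ({ξ : Module.Dual ℝ V | ∀ t : ℝ,
        (t • ξ) ∈ {ξ' : Module.Dual ℝ V | ∀ c ∈ C, ∃ n : ℤ, ξ' c = (n : ℝ)}} =
      {ξ : Module.Dual ℝ V | ∀ v ∈ Submodule.span ℝ (C : Set V), ξ v = 0}) := by
  constructor
  · ext ξ
    simp only [SetLike.mem_coe, Set.mem_setOf_eq]
    constructor
    · intro hξ v hv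
      induction hξ using Submodule.span_induction with
      | mem η hη =>
          exact aux_zero fun t => by
            obtain ⟨n, hn⟩ := hη (t • v) (hv t)
            exact ⟨n, by rw [← hn, map_smul, smul_eq_mul]⟩
      | zero => simp
      | add η₁ η₂ _ _ h1 h2 => simp [h1, h2]
      | smul s η _ h1 => simp [h1]
    · intro hξ
      classical
      -- the cospan of C, as a submodule
      let W : Submodule ℝ V :=
        { carrier := {v | ∀ t : ℝ, t • v ∈ C}
          add_mem' := fun {a b} ha hb t => by simpa [smul_add] using C.add_mem (ha t) (hb t)
          zero_mem' := fun t => by simpa using C.zero_mem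
          smul_mem' := fun s v hv t => by rw [smul_smul]; exact hv (t*s) }
      have hWC : ∀ w ∈ W, w ∈ C := fun w hw => by simpa using hw 1
      obtain ⟨U, hWU⟩ := W.exists_isCompl
      let D : AddSubgroup V := C ⊓ U.toAddSubgroup
      have hDc : IsClosed (D : Set V) := by
        have : (D : Set V) = (C : Set V) ∩ (U : Set V) := rfl
        rw [this]
        exact hC.inter U.closed_of_finiteDimensional
      have hDcos : ∀ v : V, (∀ t : ℝ, t • v ∈ D) → v = 0 := by
        intro v hv
        have hvW : v ∈ W := fun t => ((AddSubgroup.mem_inf.mp (hv t)).1)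
        have hvU : v ∈ U := by simpa using (AddSubgroup.mem_inf.mp (hv 1)).2
        exact Submodule.disjoint_def.mp hWU.disjoint v hvW hvU
      obtain ⟨ε, hε, hdisc⟩ := keyA D hDc hDcos
      let E : Submodule ℝ V := Submodule.span ℝ (D : Set V)
      have hEU : E ≤ U := Submodule.span_le.mpr (fun x hx => (AddSubgroup.mem_inf.mp hx).2)
      let L : Submodule ℤ ↥E := (AddSubgroup.toIntSubmodule D).comap ((E.subtype).restrictScalars ℤ)
      haveI : DiscreteTopology L := by
        rw [discreteTopology_iff_isOpen_singleton_zero]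
        have hset : ({0} : Set L) = (fun x : L => ((x : ↥E) : V)) ⁻¹' Metric.ball (0:V) ε := by
          ext x
          simp only [Set.mem_singleton_iff, Set.mem_preimage, Metric.mem_ball, dist_zero_right]
          constructor
          · rintro rfl; simpa using hε
          · intro hlt
            have hx0 : ((x : ↥E) : V) = 0 := hdisc _ x.2 hlt
            exact Subtype.ext (Subtype.ext hx0)
        rw [hset]
        exact Metric.isOpen_ball.preimage (continuous_subtype_val.comp continuous_subtype_val)
      haveI : IsZLattice ℝ L := ⟨by
        have hset : (L : Set ↥E) = ((↑) : ↥E → V) ⁻¹' (D : Set V) := rfl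
        rw [hset]
        exact Submodule.span_span_coe_preimage⟩
      let b := Module.Free.chooseBasis ℤ L
      let bR := b.ofZLatticeBasis ℝ
      have hint0 : ∀ x ∈ Submodule.span ℤ (Set.range bR), ∀ i, ∃ n : ℤ, bR.coord i x = n := by
        intro x hx i
        induction hx using Submodule.span_induction with
        | mem y hy =>
            obtain ⟨j, rfl⟩ := hy
            refine ⟨if j = i then 1 else 0, ?_⟩
            rw [Basis.coord_apply, Basis.repr_self, Finsupp.single_apply]
            split <;> simp
        | zero => exact ⟨0, by simp⟩
        | add y z _ _ h1 h2 =>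
            obtain ⟨n1, e1⟩ := h1; obtain ⟨n2, e2⟩ := h2
            exact ⟨n1+n2, by rw [map_add, e1, e2]; push_cast; ring⟩
        | smul z y _ h1 =>
            obtain ⟨n1, e1⟩ := h1
            exact ⟨z*n1, by rw [map_zsmul, e1, zsmul_eq_mul]; push_cast; ring⟩
      have hintD : ∀ (u : V) (hu : u ∈ D) (i : _),
          ∃ n : ℤ, bR.coord i ⟨u, Submodule.subset_span hu⟩ = n := by
        intro u hu i
        apply hint0 _ _ i
        rw [b.ofZLatticeBasis_span ℝ]
        exact hu
      -- a complement of E containing W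
      obtain ⟨Q, hQ⟩ := Submodule.exists_isCompl (W ⊔ E)
      have hP : IsCompl E (W ⊔ Q) := by
        constructor
        · rw [Submodule.disjoint_def]
          intro x hxE hxWQ
          obtain ⟨w, hw, q, hq, hx⟩ := Submodule.mem_sup.mp hxWQ
          have hq' : q = x - w := by rw [← hx]; abel
          have hqmem : q ∈ W ⊔ E := by
            rw [hq']
            exact Submodule.sub_mem _ (Submodule.mem_sup_right hxE) (Submodule.mem_sup_left hw)
          have hq0 : q = 0 := Submodule.disjoint_def.mp hQ.disjoint q hqmem hq
          have hxw : x ∈ W := by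
            have : x = w := by rw [← hx, hq0, add_zero]
            rw [this]; exact hw
          exact Submodule.disjoint_def.mp hWU.disjoint x hxw (hEU hxE)
        · rw [codisjoint_iff, ← sup_assoc, sup_comm E W, codisjoint_iff.mp hQ.codisjoint]
      let ξi : Module.Free.ChooseBasisIndex ℤ ↥L → Module.Dual ℝ V :=
        fun i => LinearMap.ofIsCompl hP (bR.coord i) 0
      have hξi_left : ∀ (x : ↥E) (i : _), ξi i (x : V) = bR.coord i x := fun x i =>
        LinearMap.ofIsCompl_left_apply hP x
      have hξi_W : ∀ w ∈ W, ∀ i, ξi i w = 0 := by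
        intro w hw i
        have hmem : w ∈ W ⊔ Q := Submodule.mem_sup_left hw
        have := LinearMap.ofIsCompl_right_apply (φ := bR.coord i)
          (ψ := (0 : ↥(W ⊔ Q) →ₗ[ℝ] ℝ)) hP ⟨w, hmem⟩
        simpa using this
      have hdecomp : ∀ c ∈ C, ∃ w ∈ W, ∃ u, u ∈ D ∧ c = w + u := by
        intro c hc
        have hcT : c ∈ W ⊔ U := by
          rw [codisjoint_iff.mp hWU.codisjoint]; exact Submodule.mem_top
        obtain ⟨w, hw, u, hu, hcwu⟩ := Submodule.mem_sup.mp hcT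
        have huC : u ∈ C := by
          have : u = c - w := by rw [← hcwu]; abel
          rw [this]
          exact AddSubgroup.sub_mem _ hc (hWC w hw)
        exact ⟨w, hw, u, AddSubgroup.mem_inf.mpr ⟨huC, (Submodule.mem_toAddSubgroup U).mpr hu⟩,
          hcwu.symm⟩
      have hξiC : ∀ i, ∀ c ∈ C, ∃ n : ℤ, ξi i c = n := by
        intro i c hc
        obtain ⟨w, hw, u, huD, rfl⟩ := hdecomp c hc
        obtain ⟨n, hn⟩ := hintD u huD i
        refine ⟨n, ?_⟩
        rw [map_add, hξi_W w hw i, zero_add]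
        have hcoe : ξi i u = ξi i ((⟨u, Submodule.subset_span huD⟩ : ↥E) : V) := rfl
        rw [hcoe, hξi_left ⟨u, Submodule.subset_span huD⟩ i, hn]
      let aco : Module.Free.ChooseBasisIndex ℤ ↥L → ℝ := fun i => ξ ((bR i : ↥E) : V)
      let η : Module.Dual ℝ V := ξ - ∑ i, aco i • ξi i
      have hηE : ∀ x : ↥E, η (x : V) = 0 := by
        intro x
        have hexp : (x : V) = ∑ i, bR.repr x i • ((bR i : ↥E) : V) := by
          have hx := bR.sum_repr x
          calc (x : V) = ((∑ i, bR.repr x i • bR i : ↥E) : V) := by rw [hx]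
          _ = ∑ i, bR.repr x i • ((bR i : ↥E) : V) := by
              rw [Submodule.coe_sum]; rfl
        have h1 : ξ (x : V) = ∑ i, bR.repr x i * aco i := by
          conv_lhs => rw [hexp]
          rw [map_sum]
          exact Finset.sum_congr rfl fun i _ => by rw [map_smul, smul_eq_mul]
        have h2 : ∀ i, ξi i (x : V) = bR.repr x i := fun i => by
          rw [hξi_left x i, Basis.coord_apply]
        simp only [η, LinearMap.sub_apply, LinearMap.sum_apply, LinearMap.smul_apply, smul_eq_mul]
        rw [h1, sub_eq_zero]
        exact Finset.sum_congr rfl fun i _ => by rw [h2 i, mul_comm]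
      have hηC : ∀ c ∈ C, ∃ n : ℤ, η c = (n : ℝ) := by
        intro c hc
        obtain ⟨w, hw, u, huD, rfl⟩ := hdecomp c hc
        refine ⟨0, ?_⟩
        have hw0 : η w = 0 := by
          simp only [η, LinearMap.sub_apply, LinearMap.sum_apply, LinearMap.smul_apply,
            smul_eq_mul]
          rw [hξ w hw, Finset.sum_eq_zero fun i _ => by rw [hξi_W w hw i, mul_zero]]
          ring
        have hu0 : η u = 0 := hηE ⟨u, Submodule.subset_span huD⟩
        rw [map_add, hw0, hu0]
        norm_num
      have hsplit : ξ = η + ∑ i, aco i • ξi i := by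
        simp only [η]
        abel
      rw [hsplit]
      exact Submodule.add_mem _ (Submodule.subset_span hηC)
        (Submodule.sum_mem _ fun i _ => Submodule.smul_mem _ _ (Submodule.subset_span (hξiC i)))
  · ext ξ
    simp only [Set.mem_setOf_eq]
    constructor
    · intro hξ v hv
      have hz : ∀ c ∈ C, ξ c = 0 := by
        intro c hc
        exact aux_zero fun t => by
          obtain ⟨n, hn⟩ := hξ t c hc
          exact ⟨n, by rw [← hn, LinearMap.smul_apply, smul_eq_mul]⟩
      induction hv using Submodule.span_induction with
      | mem x hx => exact hz x hx
      | zero => simp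
      | add x y _ _ h1 h2 => simp [h1, h2]
      | smul s x _ h1 => simp [h1]
    · intro hξ t c hc
      exact ⟨0, by simp [hξ c (Submodule.subset_span hc)]⟩
end
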